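/- Let F ⊆ ℝ^N be a nonempty closed set and μ a finite Borel measure with |μ|(F) = 0. Then ∫_F ∫_{ℝ^N \ F} d(z, F)/|y − z|^{N+1} d|μ|(z) dy ≤ C″ |μ|(ℝ^N \ F), where d(z,F) is the distance from z to F and C″ depends only on N. -/

import Mathlib

open MeasureTheory Metric Set Filter
open scoped ENNReal Topology

noncomputable section

/-- Key Marcinkiewicz estimate: if every point of `F` is at distance at least `d > 0`
from `z`, then `∫_F d / ‖y-z‖^(N+1) dy ≤ 2^(N+1) * vol(closedBall 0 1)`. -/
lemma key_est (N : ℕ) (z : EuclideanSpace ℝ (Fin N)) (d : ℝ) (hd : 0 < d)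
    (F : Set (EuclideanSpace ℝ (Fin N))) (hF : ∀ y ∈ F, d ≤ dist y z) :
    (∫⁻ y in F, ENNReal.ofReal (d / ‖y - z‖ ^ (N + 1))) ≤
      ENNReal.ofReal (2 ^ (N + 1)) *
        volume (closedBall (0 : EuclideanSpace ℝ (Fin N)) 1) := by
  set vB := volume (closedBall (0 : EuclideanSpace ℝ (Fin N)) 1) with hvB
  set A : ℕ → Set (EuclideanSpace ℝ (Fin N)) := fun k => closedBall z (2 ^ (k + 1) * d) \ ball z (2 ^ k * d) with hA
  have hcover : F ⊆ ⋃ k, A k := by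
    intro y hy
    have hdy : d ≤ dist y z := hF y hy
    set t := dist y z / d with ht
    have htpos : (1 : ℝ) ≤ t := (one_le_div hd).2 hdy
    have hfl : 1 ≤ ⌊t⌋₊ := (Nat.one_le_floor_iff t).2 htpos
    set k := Nat.log 2 ⌊t⌋₊ with hk
    have h1 : (2 : ℕ) ^ k ≤ ⌊t⌋₊ := Nat.pow_log_le_self 2 (by omega)
    have h2 : ⌊t⌋₊ < 2 ^ (k + 1) := Nat.lt_pow_succ_log_self (by norm_num) _
    refine mem_iUnion.2 ⟨k, ?_, ?_⟩
    · -- dist y z ≤ 2^(k+1) * d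
      have : t < 2 ^ (k + 1) := by
        have h2' : ⌊t⌋₊ + 1 ≤ 2 ^ (k + 1) := h2
        calc t < ⌊t⌋₊ + 1 := Nat.lt_floor_add_one t
        _ ≤ ((2 ^ (k + 1) : ℕ) : ℝ) := by exact_mod_cast h2'
        _ = (2 : ℝ) ^ (k + 1) := by push_cast; ring
      have := (div_lt_iff₀ hd).1 this
      exact mem_closedBall.2 (by linarith)
    · -- ¬ dist y z < 2^k * d
      intro hmem
      have h1' : (2 : ℝ) ^ k ≤ t := by
        calc (2 : ℝ) ^ k = ((2 ^ k : ℕ) : ℝ) := by push_cast; ring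
        _ ≤ (⌊t⌋₊ : ℝ) := by exact_mod_cast h1
        _ ≤ t := Nat.floor_le (by linarith)
      have := (le_div_iff₀ hd).1 h1'
      exact absurd (mem_ball.1 hmem) (not_lt.2 this)
  calc (∫⁻ y in F, ENNReal.ofReal (d / ‖y - z‖ ^ (N + 1)))
      ≤ ∫⁻ y in ⋃ k, A k, ENNReal.ofReal (d / ‖y - z‖ ^ (N + 1)) :=
        lintegral_mono_set hcover
    _ ≤ ∑' k, ∫⁻ y in A k, ENNReal.ofReal (d / ‖y - z‖ ^ (N + 1)) :=
        lintegral_iUnion_le _ _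
    _ ≤ ∑' k, ENNReal.ofReal (2 ^ N * (1 / 2) ^ k) * vB := by
        refine ENNReal.tsum_le_tsum fun k => ?_
        have hrk : (0 : ℝ) < 2 ^ k * d := by positivity
        have step1 : (∫⁻ y in A k, ENNReal.ofReal (d / ‖y - z‖ ^ (N + 1))) ≤
            ENNReal.ofReal (d / (2 ^ k * d) ^ (N + 1)) * volume (A k) := by
          rw [← setLIntegral_const]
          refine setLIntegral_mono measurable_const fun y hy => ?_
          refine ENNReal.ofReal_le_ofReal ?_
          have h1 : 2 ^ k * d ≤ ‖y - z‖ := by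
            have := (mem_diff _).1 hy |>.2
            rw [mem_ball, not_lt] at this
            simpa [dist_eq_norm] using this
          exact div_le_div_of_nonneg_left hd.le (by positivity)
            (pow_le_pow_left₀ hrk.le h1 _)
        have step2 : volume (A k) ≤ ENNReal.ofReal ((2 ^ (k + 1) * d) ^ N) * vB := by
          calc volume (A k) ≤ volume (closedBall z (2 ^ (k + 1) * d)) :=
                measure_mono diff_subset
          _ = ENNReal.ofReal ((2 ^ (k + 1) * d) ^
                Module.finrank ℝ (EuclideanSpace ℝ (Fin N))) * vB :=
              Measure.addHaar_closedBall' _ _ (by positivity)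
          _ = ENNReal.ofReal ((2 ^ (k + 1) * d) ^ N) * vB := by
              rw [finrank_euclideanSpace_fin]
        calc (∫⁻ y in A k, ENNReal.ofReal (d / ‖y - z‖ ^ (N + 1)))
            ≤ ENNReal.ofReal (d / (2 ^ k * d) ^ (N + 1)) *
              (ENNReal.ofReal ((2 ^ (k + 1) * d) ^ N) * vB) :=
              step1.trans (mul_le_mul_right step2 _)
          _ = ENNReal.ofReal (d / (2 ^ k * d) ^ (N + 1) * (2 ^ (k + 1) * d) ^ N) * vB := by
              rw [← mul_assoc, ← ENNReal.ofReal_mul (by positivity)]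
          _ = ENNReal.ofReal (2 ^ N * (1 / 2) ^ k) * vB := by
              congr 1
              have hdk : ((2 : ℝ) ^ k * d) ^ (N + 1) ≠ 0 := by positivity
              congr 1
              rw [mul_pow, mul_pow, pow_succ, pow_succ, ← pow_mul, ← pow_mul, one_div, inv_pow]
              field_simp
              ring
    _ = ENNReal.ofReal (2 ^ (N + 1)) * vB := by
        rw [ENNReal.tsum_mul_right]
        congr 1
        rw [← ENNReal.ofReal_tsum_of_nonneg (fun k => by positivity)
          (by exact (summable_geometric_of_lt_one (by norm_num) (by norm_num)).mul_left _)]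
        congr 1
        rw [tsum_mul_left, tsum_geometric_of_lt_one (by norm_num) (by norm_num)]
        norm_num
        ring

/-- Marcinkiewicz integral inequality: for a nonempty closed set
`F ⊆ ℝ^N` and a finite Borel measure `μ` with `μ(F) = 0`,
`∫_F ∫_{ℝ^N \ F} d(z,F)/|y-z|^{N+1} dμ(z) dy ≤ C″ μ(ℝ^N \ F)`,
with `C″` depending only on `N`. -/
theorem stmt11 (N : ℕ) :
    ∃ C > (0 : ℝ), ∀ F : Set (EuclideanSpace ℝ (Fin N)), F.Nonempty → IsClosed F →
      ∀ μ : Measure (EuclideanSpace ℝ (Fin N)), IsFiniteMeasure μ → μ F = 0 →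
        (∫⁻ y in F, ∫⁻ z in Fᶜ,
            ENNReal.ofReal (Metric.infDist z F / ‖y - z‖ ^ (N + 1)) ∂μ) ≤
          ENNReal.ofReal C * μ Fᶜ := by
  classical
  set E := EuclideanSpace ℝ (Fin N)
  set vB := volume (closedBall (0 : E) 1) with hvB
  have hvBfin : vB ≠ ⊤ := measure_closedBall_lt_top.ne
  refine ⟨max 1 (2 ^ (N + 1) * vB.toReal), lt_of_lt_of_le one_pos (le_max_left _ _),
    fun F hFne hFcl μ hμfin hμF => ?_⟩
  have hbound : ENNReal.ofReal (2 ^ (N + 1)) * vB ≤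
      ENNReal.ofReal (max 1 (2 ^ (N + 1) * vB.toReal)) := by
    have : ENNReal.ofReal (2 ^ (N + 1)) * vB =
        ENNReal.ofReal (2 ^ (N + 1) * vB.toReal) := by
      rw [ENNReal.ofReal_mul (by positivity), ENNReal.ofReal_toReal hvBfin]
    rw [this]
    exact ENNReal.ofReal_le_ofReal (le_max_right _ _)
  -- measurability of the integrand on the product
  have hmeas : Measurable fun p : E × E =>
      ENNReal.ofReal (Metric.infDist p.2 F / ‖p.1 - p.2‖ ^ (N + 1)) := by
    apply Measurable.ennreal_ofReal
    exact ((continuous_infDist_pt F).comp continuous_snd).measurable.div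
      (((continuous_fst.sub continuous_snd).norm.pow _).measurable)
  rw [lintegral_lintegral_swap (f := fun y z =>
      ENNReal.ofReal (Metric.infDist z F / ‖y - z‖ ^ (N + 1))) hmeas.aemeasurable]
  calc (∫⁻ z in Fᶜ, (∫⁻ y in F,
          ENNReal.ofReal (Metric.infDist z F / ‖y - z‖ ^ (N + 1))) ∂μ)
      ≤ ∫⁻ _ in Fᶜ, ENNReal.ofReal (max 1 (2 ^ (N + 1) * vB.toReal)) ∂μ := by
        refine setLIntegral_mono measurable_const fun z hz => ?_
        have hd : 0 < infDist z F := (hFcl.notMem_iff_infDist_pos hFne).1 hz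
        refine le_trans (key_est N z _ hd F fun y hy => ?_) hbound
        rw [dist_comm]; exact infDist_le_dist_of_mem hy
    _ = ENNReal.ofReal (max 1 (2 ^ (N + 1) * vB.toReal)) * μ Fᶜ := setLIntegral_const _ _
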